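/- Let f : 𝔽₂ⁿ → 𝔽₂ with f(0) = 0 satisfy: (a) W_f(ν) + W_f(ν') ≠ 2ⁿ and W_f(ν) − W_f(ν') ≠ 2ⁿ for all ν ≠ ν' in 𝔽₂ⁿ; and (b) 2·max_{ν} W_f(ν) − min_{ν} W_f(ν) ≥ 2ⁿ. Let G be an (n,m−1)-function with G(0) = 0 such that μ₁f + μ̃·G is not affine for every nonzero (μ₁,μ̃) ∈ 𝔽₂ × 𝔽₂^{m−1}, and such that the code C_G is minimal. Let F = (f,G) be the (n,m)-function x ↦ (f(x), G(x)) and write A_{μ̃} = f + μ̃·G. Then the code C_F is minimal if and only if the following three conditions all hold: (1) for every μ̃ ∈ 𝔽₂^{m−1}∖{0} and all ν ≠ ν' in 𝔽₂ⁿ, W_{A_{μ̃}}(ν) + W_{A_{μ̃}}(ν') ≠ 2ⁿ and W_{A_{μ̃}}(ν) − W_{A_{μ̃}}(ν') ≠ 2ⁿ; (2) for every μ̃ ∈ 𝔽₂^{m−1}∖{0}, all ν, ν' ∈ 𝔽₂ⁿ, and every (i,j,k) ∈ {(1,0,0),(0,1,0),(0,0,1)}, one has (−1)^i W_f(ν)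 + (−1)^j W_G(μ̃,ν') + (−1)^k W_{A_{μ̃}}(ν+ν') ≠ 2ⁿ; (3) for all distinct μ̃, μ̃' ∈ 𝔽₂^{m−1}∖{0}, all ν, ν' ∈ 𝔽₂ⁿ, and every (i,j) ∈ {(0,1),(1,0)}, one has W_{A_{μ̃}}(ν) + (−1)^i W_G(μ̃',ν') + (−1)^j W_{A_{μ̃+μ̃'}}(ν+ν') ≠ 2ⁿ. -/

import Mathlib

def dotp {n : ℕ} (v x : Fin n → ZMod 2) : ZMod 2 := ∑ i, v i * x i

def wht {n : ℕ} (f : (Fin n → ZMod 2) → ZMod 2) (ν : Fin n → ZMod 2) : ℤ :=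
  ∑ x : Fin n → ZMod 2, (-1 : ℤ) ^ (f x + dotp ν x).val

def whtF {n m : ℕ} (F : (Fin n → ZMod 2) → (Fin m → ZMod 2))
    (μ : Fin m → ZMod 2) (ν : Fin n → ZMod 2) : ℤ :=
  wht (fun x => dotp μ (F x)) ν

def cw {n m : ℕ} (F : (Fin n → ZMod 2) → (Fin m → ZMod 2))
    (μ : Fin m → ZMod 2) (ν : Fin n → ZMod 2) :
    {x : Fin n → ZMod 2 // x ≠ 0} → ZMod 2 :=
  fun x => dotp μ (F x.1) + dotp ν x.1

def codeF {n m : ℕ} (F : (Fin n → ZMod 2) → (Fin m → ZMod 2)) :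
    Set ({x : Fin n → ZMod 2 // x ≠ 0} → ZMod 2) :=
  Set.range fun p : (Fin m → ZMod 2) × (Fin n → ZMod 2) => cw F p.1 p.2

def wt {n : ℕ} (c : {x : Fin n → ZMod 2 // x ≠ 0} → ZMod 2) : ℕ :=
  (Finset.univ.filter fun x => c x = 1).card

def IsMinimal {n : ℕ} (C : Set ({x : Fin n → ZMod 2 // x ≠ 0} → ZMod 2)) : Prop :=
  ∀ c ∈ C, ∀ c' ∈ C, c ≠ 0 → c' ≠ 0 →
    {x | c' x = 1} ⊆ {x | c x = 1} → c' = c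

def weights {n m : ℕ} (F : (Fin n → ZMod 2) → (Fin m → ZMod 2)) : Set ℕ :=
  {w | ∃ c ∈ codeF F, c ≠ 0 ∧ wt c = w}


-- auxiliary lemmas


lemma z2cases (a : ZMod 2) : a = 0 ∨ a = 1 := by revert a; decide

lemma z2add_eq_zero {a b : ZMod 2} (h : a + b = 0) : a = b := by revert h; revert a b; decide

lemma fun2_add_self {k : ℕ} (w : Fin k → ZMod 2) : w + w = 0 := by
  funext i; have : ∀ a : ZMod 2, a + a = 0 := by decide
  exact this (w i)

lemma fun2_add_eq_zero {k : ℕ} {w w' : Fin k → ZMod 2} (h : w + w' = 0) : w = w' := by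
  funext i; exact z2add_eq_zero (congrFun h i)

lemma addv_cancel {k : ℕ} (v w : Fin k → ZMod 2) : v + w + w = v := by
  rw [add_assoc, fun2_add_self, add_zero]

lemma addv_cancel_left {k : ℕ} (v w : Fin k → ZMod 2) : v + (v + w) = w := by
  rw [← add_assoc, fun2_add_self, zero_add]

lemma dotp_zero_right {k : ℕ} (v : Fin k → ZMod 2) : dotp v 0 = 0 := by simp [dotp]

lemma dotp_zero_left {k : ℕ} (x : Fin k → ZMod 2) : dotp 0 x = 0 := by simp [dotp]

lemma dotp_add_left {k : ℕ} (v w x : Fin k → ZMod 2) :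
    dotp (v + w) x = dotp v x + dotp w x := by
  simp [dotp, add_mul, Finset.sum_add_distrib]

lemma dotp_add_right {k : ℕ} (v x y : Fin k → ZMod 2) :
    dotp v (x + y) = dotp v x + dotp v y := by
  simp [dotp, mul_add, Finset.sum_add_distrib]

lemma dotp_single {k : ℕ} (v : Fin k → ZMod 2) (i : Fin k) :
    dotp v (Pi.single i 1) = v i := by
  simp [dotp, Pi.single_apply, mul_ite, Finset.sum_ite_eq]

lemma dotp_cons {m' : ℕ} (μ : Fin (m' + 1) → ZMod 2) (a : ZMod 2) (g : Fin m' → ZMod 2) :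
    dotp μ (Fin.cons a g) = μ 0 * a + dotp (Fin.tail μ) g := by
  simp [dotp, Fin.sum_univ_succ, Fin.tail]

lemma cons_add {k : ℕ} (a a' : ZMod 2) (t t' : Fin k → ZMod 2) :
    (Fin.cons a t + Fin.cons a' t' : Fin (k+1) → ZMod 2) = Fin.cons (a + a') (t + t') := by
  funext i; refine Fin.cases ?_ ?_ i <;> simp

lemma cons_zero_zero {k : ℕ} : (Fin.cons 0 0 : Fin (k+1) → ZMod 2) = 0 := by
  funext i; refine Fin.cases ?_ ?_ i <;> simp

lemma exists_dotp_one {k : ℕ} (ν : Fin k → ZMod 2) (h : ν ≠ 0) :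
    ∃ x : Fin k → ZMod 2, x ≠ 0 ∧ dotp ν x = 1 := by
  obtain ⟨i, hi⟩ := Function.ne_iff.mp h
  refine ⟨Pi.single i 1, ?_, ?_⟩
  · intro h0
    have := congrFun h0 i
    simp [Pi.single_eq_same] at this
  · rw [dotp_single]
    exact (z2cases (ν i)).resolve_left hi

lemma sum_pm {n : ℕ} (h : (Fin n → ZMod 2) → ZMod 2) (h0 : h 0 = 0) :
    (∑ x : Fin n → ZMod 2, (-1 : ℤ) ^ (h x).val) =
      2 ^ n - 2 * ((Finset.univ.filter fun x : {x : Fin n → ZMod 2 // x ≠ 0} => h x.1 = 1).card : ℤ) := by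
  have hcardeq : (Finset.univ.filter fun x : {x : Fin n → ZMod 2 // x ≠ 0} => h x.1 = 1).card
      = (Finset.univ.filter fun x : Fin n → ZMod 2 => h x = 1).card := by
    refine Finset.card_bij (fun a _ => a.1) ?_ ?_ ?_
    · intro a ha
      simp only [Finset.mem_filter, Finset.mem_univ, true_and] at ha ⊢
      exact ha
    · intro a₁ _ a₂ _ hh; exact Subtype.ext hh
    · intro b hb
      simp only [Finset.mem_filter, Finset.mem_univ, true_and] at hb
      have hb0 : b ≠ 0 := by rintro rfl; rw [h0] at hb; exact (by decide : (0:ZMod 2) ≠ 1) hb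
      exact ⟨⟨b, hb0⟩, by simp [hb], rfl⟩
  rw [hcardeq]
  have step1 : (∑ x : Fin n → ZMod 2, (-1 : ℤ) ^ (h x).val)
      = ∑ x : Fin n → ZMod 2, (if h x = 1 then (-1 : ℤ) else 1) := by
    refine Finset.sum_congr rfl fun x _ => ?_
    rcases z2cases (h x) with hx | hx <;> rw [hx] <;> norm_num [ZMod.val_one]
  rw [step1]
  rw [Finset.sum_ite]
  simp only [Finset.sum_const, nsmul_eq_mul, mul_one, mul_neg_one]
  have hsplit := Finset.card_filter_add_card_filter_not
    (s := (Finset.univ : Finset (Fin n → ZMod 2))) (fun x => h x = 1)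
  have hcard : (Finset.univ : Finset (Fin n → ZMod 2)).card = 2 ^ n := by
    simp [Finset.card_univ]
  rw [hcard] at hsplit
  have hz : ((Finset.univ.filter fun x : Fin n → ZMod 2 => h x = 1).card : ℤ)
      + ((Finset.univ.filter fun x : Fin n → ZMod 2 => ¬ h x = 1).card : ℤ) = 2 ^ n := by
    exact_mod_cast hsplit
  linarith

lemma incl_iff {n : ℕ} (c c' : {x : Fin n → ZMod 2 // x ≠ 0} → ZMod 2) :
    ({x | c' x = 1} ⊆ {x | c x = 1}) ↔ (wt c : ℤ) = wt c' + wt (fun x => c x + c' x) := by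
  classical
  set A := Finset.univ.filter fun x => c x = 1 with hA
  set B := Finset.univ.filter fun x => c' x = 1 with hB
  set D := Finset.univ.filter fun x : {x : Fin n → ZMod 2 // x ≠ 0} => c x + c' x = 1 with hD
  have hDeq : D = (A \ B) ∪ (B \ A) := by
    ext x
    simp only [hD, hA, hB, Finset.mem_filter, Finset.mem_univ, true_and, Finset.mem_union,
      Finset.mem_sdiff]
    rcases z2cases (c x) with h1 | h1 <;> rcases z2cases (c' x) with h2 | h2 <;>
      rw [h1, h2] <;> decide
  have hDcard : D.card = (A \ B).card + (B \ A).card := by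
    rw [hDeq]
    exact Finset.card_union_of_disjoint (Finset.sdiff_disjoint.mono_right Finset.sdiff_subset)
  have h1 : (A ∩ B).card + (A \ B).card = A.card := Finset.card_inter_add_card_sdiff A B
  have h2 : (B ∩ A).card + (B \ A).card = B.card := Finset.card_inter_add_card_sdiff B A
  have hBA : (B ∩ A).card = (A ∩ B).card := by rw [Finset.inter_comm]
  have hsub : ({x | c' x = 1} ⊆ {x | c x = 1}) ↔ B ⊆ A := by
    constructor
    · intro hs x hx
      simp only [hB, Finset.mem_filter, Finset.mem_univ, true_and] at hx
      simp only [hA, Finset.mem_filter, Finset.mem_univ, true_and]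
      exact hs hx
    · intro hs x hx
      simp only [Set.mem_setOf_eq] at hx
      have hxB : x ∈ B := by simp [hB, hx]
      have := hs hxB
      simp only [hA, Finset.mem_filter, Finset.mem_univ, true_and] at this
      exact this
  rw [hsub]
  have : B ⊆ A ↔ (B \ A).card = 0 := by
    rw [Finset.card_eq_zero, Finset.sdiff_eq_empty_iff_subset]
  rw [this]
  show _ ↔ (A.card : ℤ) = B.card + D.card
  constructor
  · intro hz; omega
  · intro hz; omega

lemma wt_formula {n : ℕ} (g : (Fin n → ZMod 2) → ZMod 2) (hg : g 0 = 0) (ν : Fin n → ZMod 2) :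
    2 * (wt (fun x : {x : Fin n → ZMod 2 // x ≠ 0} => g x.1 + dotp ν x.1) : ℤ) = 2 ^ n - wht g ν := by
  have h0 : (fun x => g x + dotp ν x) 0 = 0 := by
    simp [hg, dotp_zero_right]
  have := sum_pm (fun x => g x + dotp ν x) h0
  have hw : wht g ν = ∑ x : Fin n → ZMod 2, (-1 : ℤ) ^ ((fun x => g x + dotp ν x) x).val := rfl
  rw [hw, this]
  have hwt : wt (fun x : {x : Fin n → ZMod 2 // x ≠ 0} => g x.1 + dotp ν x.1)
      = (Finset.univ.filter fun x : {x : Fin n → ZMod 2 // x ≠ 0} =>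
          (fun x => g x + dotp ν x) x.1 = 1).card := rfl
  rw [hwt]
  ring

lemma incl_iff_wht {n : ℕ} (g g' : (Fin n → ZMod 2) → ZMod 2) (hg : g 0 = 0) (hg' : g' 0 = 0)
    (ν ν' : Fin n → ZMod 2) :
    ({x : {x : Fin n → ZMod 2 // x ≠ 0} | g' x.1 + dotp ν' x.1 = 1}
        ⊆ {x : {x : Fin n → ZMod 2 // x ≠ 0} | g x.1 + dotp ν x.1 = 1})
      ↔ wht g' ν' + wht (fun x => g x + g' x) (ν + ν') = 2 ^ n + wht g ν := by
  have key := incl_iff (fun x : {x : Fin n → ZMod 2 // x ≠ 0} => g x.1 + dotp ν x.1)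
    (fun x : {x : Fin n → ZMod 2 // x ≠ 0} => g' x.1 + dotp ν' x.1)
  have hsum : (fun x : {x : Fin n → ZMod 2 // x ≠ 0} =>
      (g x.1 + dotp ν x.1) + (g' x.1 + dotp ν' x.1))
      = fun x : {x : Fin n → ZMod 2 // x ≠ 0} => (g x.1 + g' x.1) + dotp (ν + ν') x.1 := by
    funext x
    rw [dotp_add_left]
    ring
  rw [hsum] at key
  rw [key]
  have w1 := wt_formula g hg ν
  have w2 := wt_formula g' hg' ν'
  have w3 := wt_formula (fun x => g x + g' x) (by simp [hg, hg']) (ν + ν')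
  constructor
  · intro hq; linarith
  · intro hq; linarith

lemma wht_const_zero {n : ℕ} (ν : Fin n → ZMod 2) (hν : ν ≠ 0) :
    wht (fun _ => (0 : ZMod 2)) ν = 0 := by
  obtain ⟨i, hi⟩ : ∃ i, ν i ≠ 0 := Function.ne_iff.mp hν
  have hν1 : ν i = 1 := (z2cases (ν i)).resolve_left hi
  show (∑ x : Fin n → ZMod 2, (-1 : ℤ) ^ ((0 : ZMod 2) + dotp ν x).val) = 0
  refine Finset.sum_involution (fun a _ => a + Pi.single i 1) ?_ ?_ ?_ ?_
  · intro a _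
    rw [dotp_add_right, dotp_single, hν1]
    rcases z2cases (dotp ν a) with h | h <;> rw [h] <;> decide
  · intro a _ _
    intro hcontra
    have h2 := congrFun hcontra i
    simp only [Pi.add_apply, Pi.single_eq_same] at h2
    rcases z2cases (a i) with hh | hh <;> rw [hh] at h2 <;> exact absurd h2 (by decide)
  · intro a _; exact Finset.mem_univ _
  · intro a _
    show a + Pi.single i 1 + Pi.single i 1 = a
    rw [add_assoc, fun2_add_self, add_zero]
theorem stmt9 (n m' : ℕ) (f : (Fin n → ZMod 2) → ZMod 2) (hf0 : f 0 = 0)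
    (ha : ∀ ν ν' : Fin n → ZMod 2, ν ≠ ν' →
      wht f ν + wht f ν' ≠ 2 ^ n ∧ wht f ν - wht f ν' ≠ 2 ^ n)
    (hb : ∃ M mi : ℤ,
      IsGreatest {w : ℤ | ∃ ν : Fin n → ZMod 2, wht f ν = w} M ∧
      IsLeast {w : ℤ | ∃ ν : Fin n → ZMod 2, wht f ν = w} mi ∧
      2 ^ n ≤ 2 * M - mi)
    (G : (Fin n → ZMod 2) → (Fin m' → ZMod 2)) (hG0 : G 0 = 0)
    (hna : ∀ (μ₁ : ZMod 2) (μt : Fin m' → ZMod 2), ¬(μ₁ = 0 ∧ μt = 0) →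
      ¬ ∃ (ν : Fin n → ZMod 2) (ε : ZMod 2),
        ∀ x, μ₁ * f x + dotp μt (G x) = dotp ν x + ε)
    (hGmin : IsMinimal (codeF G))
    (F : (Fin n → ZMod 2) → (Fin (m' + 1) → ZMod 2))
    (hF : ∀ x, F x = Fin.cons (f x) (G x)) :
    IsMinimal (codeF F) ↔
      ((∀ μt : Fin m' → ZMod 2, μt ≠ 0 → ∀ ν ν' : Fin n → ZMod 2, ν ≠ ν' →
          wht (fun x => f x + dotp μt (G x)) ν + wht (fun x => f x + dotp μt (G x)) ν' ≠ 2 ^ n ∧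
          wht (fun x => f x + dotp μt (G x)) ν - wht (fun x => f x + dotp μt (G x)) ν' ≠ 2 ^ n) ∧
       (∀ μt : Fin m' → ZMod 2, μt ≠ 0 → ∀ ν ν' : Fin n → ZMod 2,
          -wht f ν + whtF G μt ν' + wht (fun x => f x + dotp μt (G x)) (ν + ν') ≠ 2 ^ n ∧
          wht f ν - whtF G μt ν' + wht (fun x => f x + dotp μt (G x)) (ν + ν') ≠ 2 ^ n ∧
          wht f ν + whtF G μt ν' - wht (fun x => f x + dotp μt (G x)) (ν + ν') ≠ 2 ^ n) ∧
       (∀ μt μt' : Fin m' → ZMod 2, μt ≠ 0 → μt' ≠ 0 → μt ≠ μt' →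
          ∀ ν ν' : Fin n → ZMod 2,
          wht (fun x => f x + dotp μt (G x)) ν + whtF G μt' ν'
              - wht (fun x => f x + dotp (μt + μt') (G x)) (ν + ν') ≠ 2 ^ n ∧
          wht (fun x => f x + dotp μt (G x)) ν - whtF G μt' ν'
              + wht (fun x => f x + dotp (μt + μt') (G x)) (ν + ν') ≠ 2 ^ n)) := by
  classical
  clear hb
  have hF0 : F 0 = 0 := by rw [hF 0, hf0, hG0]; exact cons_zero_zero
  have hDg : ∀ μ : Fin (m'+1) → ZMod 2, (fun x => dotp μ (F x)) 0 = 0 := by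
    intro μ; show dotp μ (F 0) = 0; rw [hF0, dotp_zero_right]
  have hw : ∀ (μ : Fin (m'+1) → ZMod 2) (ν : Fin n → ZMod 2),
      wht (fun x => dotp μ (F x)) ν = wht (fun x => μ 0 * f x + dotp (Fin.tail μ) (G x)) ν := by
    intro μ ν
    apply congrArg (fun g => wht g ν)
    funext x; rw [hF x, dotp_cons]
  have hw2 : ∀ (μ μ' : Fin (m'+1) → ZMod 2) (w : Fin n → ZMod 2),
      wht (fun x => dotp μ (F x) + dotp μ' (F x)) w
        = wht (fun x => (μ 0 + μ' 0) * f x + dotp (Fin.tail μ + Fin.tail μ') (G x)) w := by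
    intro μ μ' w
    apply congrArg (fun g => wht g w)
    funext x
    rw [← dotp_add_left, hF x, dotp_cons]
    rfl
  have E0 : ∀ (t : Fin m' → ZMod 2) (w : Fin n → ZMod 2),
      wht (fun x => (0:ZMod 2) * f x + dotp t (G x)) w = whtF G t w := by
    intro t w
    show wht (fun x => (0:ZMod 2) * f x + dotp t (G x)) w = wht (fun x => dotp t (G x)) w
    apply congrArg (fun g => wht g w); funext x; rw [zero_mul, zero_add]
  have E1 : ∀ (t : Fin m' → ZMod 2) (w : Fin n → ZMod 2),
      wht (fun x => (1:ZMod 2) * f x + dotp t (G x)) w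
        = wht (fun x => f x + dotp t (G x)) w := by
    intro t w; apply congrArg (fun g => wht g w); funext x; rw [one_mul]
  have E1' : ∀ (w : Fin n → ZMod 2),
      wht (fun x => f x + dotp (0 : Fin m' → ZMod 2) (G x)) w = wht f w := by
    intro w; apply congrArg (fun g => wht g w); funext x; rw [dotp_zero_left, add_zero]
  have E00 : ∀ (w : Fin n → ZMod 2), w ≠ 0 →
      wht (fun x => (0:ZMod 2) * f x + dotp (0 : Fin m' → ZMod 2) (G x)) w = 0 := by
    intro w hw0
    have hz : (fun x : Fin n → ZMod 2 => (0:ZMod 2) * f x + dotp (0 : Fin m' → ZMod 2) (G x))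
        = fun _ => (0 : ZMod 2) := by
      funext x; rw [zero_mul, dotp_zero_left, add_zero]
    rw [hz]; exact wht_const_zero w hw0
  have E0' : ∀ (w : Fin n → ZMod 2), w ≠ 0 → whtF G (0 : Fin m' → ZMod 2) w = 0 := by
    intro w hw0
    show wht (fun x => dotp (0 : Fin m' → ZMod 2) (G x)) w = 0
    have hz : (fun x : Fin n → ZMod 2 => dotp (0 : Fin m' → ZMod 2) (G x))
        = fun _ => (0:ZMod 2) := by funext x; rw [dotp_zero_left]
    rw [hz]; exact wht_const_zero w hw0
  have hcw0 : ∀ (μ : Fin (m'+1) → ZMod 2) (ν : Fin n → ZMod 2),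
      cw F μ ν = 0 → μ = 0 ∧ ν = 0 := by
    intro μ ν h
    have hall : ∀ x : Fin n → ZMod 2, dotp μ (F x) = dotp ν x := by
      intro x
      by_cases hx : x = 0
      · subst hx; rw [hF0, dotp_zero_right, dotp_zero_right]
      · have hx2 := congrFun h ⟨x, hx⟩
        simp only [cw, Pi.zero_apply] at hx2
        exact z2add_eq_zero hx2
    have hμ : μ = 0 := by
      by_contra hμ
      refine hna (μ 0) (Fin.tail μ) ?_ ⟨ν, 0, fun x => ?_⟩
      · rintro ⟨h0, ht⟩
        apply hμ
        rw [← Fin.cons_self_tail μ, h0, ht, cons_zero_zero]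
      · have hx := hall x
        rw [hF x, dotp_cons] at hx
        rw [add_zero]
        exact hx
    have hν : ν = 0 := by
      by_contra hν
      obtain ⟨x, hx0, hx1⟩ := exists_dotp_one ν hν
      have hx := hall x
      rw [hμ, dotp_zero_left, hx1] at hx
      exact (by decide : (0:ZMod 2) ≠ 1) hx
    exact ⟨hμ, hν⟩
  have hcw00 : cw F 0 0 = 0 := by
    funext x; show dotp 0 (F x.1) + dotp 0 x.1 = 0
    rw [dotp_zero_left, dotp_zero_left, add_zero]
  have hnzμ : ∀ (μ : Fin (m'+1) → ZMod 2) (ν : Fin n → ZMod 2), μ ≠ 0 → cw F μ ν ≠ 0 :=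
    fun μ ν hμ h => hμ (hcw0 μ ν h).1
  have hnzν : ∀ (ν : Fin n → ZMod 2), ν ≠ 0 → cw F 0 ν ≠ 0 :=
    fun ν hν h => hν (hcw0 _ _ h).2
  have hconsne0 : ∀ (a : ZMod 2) (t : Fin m' → ZMod 2), ¬(a = 0 ∧ t = 0) →
      (Fin.cons a t : Fin (m'+1) → ZMod 2) ≠ 0 := by
    intro a t hat hc
    rw [← cons_zero_zero] at hc
    exact hat (Fin.cons_inj.mp hc)
  have hinj : ∀ (μ : Fin (m'+1) → ZMod 2) (ν : Fin n → ZMod 2) μ' ν',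
      cw F μ ν = cw F μ' ν' → μ = μ' ∧ ν = ν' := by
    intro μ ν μ' ν' h
    have hz : cw F (μ + μ') (ν + ν') = 0 := by
      funext x
      show dotp (μ + μ') (F x.1) + dotp (ν + ν') x.1 = 0
      rw [dotp_add_left, dotp_add_left]
      have hx := congrFun h x
      simp only [cw] at hx
      have key : ∀ p q r s : ZMod 2, p + q = r + s → p + r + (q + s) = 0 := by decide
      exact key _ _ _ _ hx
    obtain ⟨h1, h2⟩ := hcw0 _ _ hz
    exact ⟨fun2_add_eq_zero h1, fun2_add_eq_zero h2⟩
  have hIncl : ∀ (μ : Fin (m'+1) → ZMod 2) (ν : Fin n → ZMod 2) μ' ν',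
      ({x | cw F μ' ν' x = 1} ⊆ {x | cw F μ ν x = 1}) ↔
        wht (fun x => μ' 0 * f x + dotp (Fin.tail μ') (G x)) ν'
          + wht (fun x => (μ 0 + μ' 0) * f x + dotp (Fin.tail μ + Fin.tail μ') (G x)) (ν + ν')
          = 2 ^ n + wht (fun x => μ 0 * f x + dotp (Fin.tail μ) (G x)) ν := by
    intro μ ν μ' ν'
    have key := incl_iff_wht (fun x => dotp μ (F x)) (fun x => dotp μ' (F x))
      (hDg μ) (hDg μ') ν ν'
    rw [hw μ' ν', hw μ ν, hw2 μ μ' (ν + ν')] at key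
    exact key
  have hc_eq : ∀ (s : Fin m' → ZMod 2) (w : Fin n → ZMod 2),
      cw F (Fin.cons 0 s) w = cw G s w := by
    intro s w; funext x
    show dotp (Fin.cons 0 s) (F x.1) + dotp w x.1 = dotp s (G x.1) + dotp w x.1
    rw [hF x.1, dotp_cons, Fin.cons_zero, Fin.tail_cons, zero_mul, zero_add]
  have hfwd : IsMinimal (codeF F) → ∀ (a : ZMod 2) (t : Fin m' → ZMod 2) (ν : Fin n → ZMod 2)
      (a' : ZMod 2) (t' : Fin m' → ZMod 2) (ν' : Fin n → ZMod 2),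
      (Fin.cons a t : Fin (m'+1) → ZMod 2) ≠ Fin.cons a' t' →
      cw F (Fin.cons a t) ν ≠ 0 → cw F (Fin.cons a' t') ν' ≠ 0 →
      wht (fun x => a' * f x + dotp t' (G x)) ν'
        + wht (fun x => (a + a') * f x + dotp (t + t') (G x)) (ν + ν')
        ≠ 2 ^ n + wht (fun x => a * f x + dotp t (G x)) ν := by
    intro hmin a t ν a' t' ν' hne h1 h2 hEq
    have hkey := hIncl (Fin.cons a t) ν (Fin.cons a' t') ν'
    simp only [Fin.cons_zero, Fin.tail_cons] at hkey
    have hsub := hkey.mpr hEq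
    have m1 : cw F (Fin.cons a t) ν ∈ codeF F := ⟨(Fin.cons a t, ν), rfl⟩
    have m2 : cw F (Fin.cons a' t') ν' ∈ codeF F := ⟨(Fin.cons a' t', ν'), rfl⟩
    have hcc := hmin (cw F (Fin.cons a t) ν) m1 (cw F (Fin.cons a' t') ν') m2 h1 h2 hsub
    exact hne ((hinj _ _ _ _ hcc).1).symm
  constructor
  · -- minimal → conditions
    intro hmin
    refine ⟨?_, ?_, ?_⟩
    · -- condition (1)
      intro μt hμt ν ν' hνν'
      have hνν0 : ν + ν' ≠ 0 := fun h => hνν' (fun2_add_eq_zero h)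
      have hz1 : cw F (Fin.cons 0 (0 : Fin m' → ZMod 2)) (ν + ν') ≠ 0 := by
        rw [cons_zero_zero]; exact hnzν _ hνν0
      have hz2 : ∀ w, cw F (Fin.cons 1 μt) w ≠ 0 := fun w =>
        hnzμ _ _ (hconsne0 1 μt (fun h => (by decide : (1:ZMod 2) ≠ 0) h.1))
      have hne1 : (Fin.cons (0:ZMod 2) (0:Fin m' → ZMod 2) : Fin (m'+1) → ZMod 2)
          ≠ Fin.cons 1 μt :=
        fun h => (by decide : (0:ZMod 2) ≠ 1) (Fin.cons_inj.mp h).1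
      have hv : ν + ν' + ν = ν' := by rw [add_comm ν ν']; exact addv_cancel ν' ν
      constructor
      · have H := hfwd hmin 0 0 (ν + ν') 1 μt ν hne1 hz1 (hz2 ν)
        simp only [zero_add] at H
        simp only [E1] at H
        rw [E00 (ν + ν') hνν0, hv] at H
        intro hg; exact H (by linarith)
      · have H := hfwd hmin 1 μt ν' 0 0 (ν + ν') (fun h => hne1 h.symm) (hz2 ν') hz1
        simp only [add_zero] at H
        simp only [E1] at H
        rw [E00 (ν + ν') hνν0] at H
        have hv2 : ν' + (ν + ν') = ν := by rw [add_comm ν ν']; exact addv_cancel_left ν' ν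
        rw [hv2] at H
        intro hg; exact H (by linarith)
    · -- condition (2)
      intro μt hμt ν ν'
      have hz2 : ∀ w, cw F (Fin.cons 1 μt) w ≠ 0 := fun w =>
        hnzμ _ _ (hconsne0 1 μt (fun h => (by decide : (1:ZMod 2) ≠ 0) h.1))
      have hzf : ∀ w, cw F (Fin.cons 1 (0:Fin m' → ZMod 2)) w ≠ 0 := fun w =>
        hnzμ _ _ (hconsne0 1 0 (fun h => (by decide : (1:ZMod 2) ≠ 0) h.1))
      have hzG : ∀ w, cw F (Fin.cons 0 μt) w ≠ 0 := fun w =>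
        hnzμ _ _ (hconsne0 0 μt (fun h => hμt h.2))
      have hne10 : (Fin.cons (1:ZMod 2) (0:Fin m' → ZMod 2) : Fin (m'+1) → ZMod 2)
          ≠ Fin.cons 0 μt :=
        fun h => (by decide : (1:ZMod 2) ≠ 0) (Fin.cons_inj.mp h).1
      have hne1μ : (Fin.cons (1:ZMod 2) μt : Fin (m'+1) → ZMod 2)
          ≠ Fin.cons 1 (0:Fin m' → ZMod 2) :=
        fun h => hμt (Fin.cons_inj.mp h).2
      refine ⟨?_, ?_, ?_⟩
      · have H := hfwd hmin 1 0 ν 0 μt ν' hne10 (hzf ν) (hzG ν')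
        simp only [add_zero, zero_add] at H
        simp only [E0, E1, E1'] at H
        intro hg; exact H (by linarith)
      · have H := hfwd hmin 0 μt ν' 1 0 ν (fun h => hne10 h.symm) (hzG ν') (hzf ν)
        simp only [add_zero, zero_add] at H
        simp only [E0, E1, E1'] at H
        rw [add_comm ν' ν] at H
        intro hg; exact H (by linarith)
      · have H := hfwd hmin 1 μt (ν + ν') 1 0 ν hne1μ (hz2 (ν + ν')) (hzf ν)
        rw [show ((1:ZMod 2) + 1) = 0 from by decide] at H
        simp only [add_zero] at H
        simp only [E0, E1, E1'] at H
        have hv : ν + ν' + ν = ν' := by rw [add_comm ν ν']; exact addv_cancel ν' ν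
        rw [hv] at H
        intro hg; exact H (by linarith)
    · -- condition (3)
      intro μt μt' hμt hμt' hμμ ν ν'
      have hzA : ∀ w, cw F (Fin.cons 1 (μt + μt')) w ≠ 0 := fun w =>
        hnzμ _ _ (hconsne0 1 _ (fun h => (by decide : (1:ZMod 2) ≠ 0) h.1))
      have hzB : ∀ w, cw F (Fin.cons 0 μt') w ≠ 0 := fun w =>
        hnzμ _ _ (hconsne0 0 μt' (fun h => hμt' h.2))
      have hzC : ∀ w, cw F (Fin.cons 1 μt) w ≠ 0 := fun w =>
        hnzμ _ _ (hconsne0 1 μt (fun h => (by decide : (1:ZMod 2) ≠ 0) h.1))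
      have hneA : (Fin.cons (1:ZMod 2) (μt + μt') : Fin (m'+1) → ZMod 2)
          ≠ Fin.cons 0 μt' :=
        fun h => (by decide : (1:ZMod 2) ≠ 0) (Fin.cons_inj.mp h).1
      have hneB : (Fin.cons (0:ZMod 2) μt' : Fin (m'+1) → ZMod 2)
          ≠ Fin.cons 1 μt :=
        fun h => (by decide : (0:ZMod 2) ≠ 1) (Fin.cons_inj.mp h).1
      constructor
      · have H := hfwd hmin 1 (μt + μt') (ν + ν') 0 μt' ν' hneA (hzA (ν + ν')) (hzB ν')
        simp only [add_zero, zero_add] at H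
        simp only [E0, E1] at H
        rw [addv_cancel μt μt', addv_cancel ν ν'] at H
        intro hg; exact H (by linarith)
      · have H := hfwd hmin 0 μt' ν' 1 μt ν hneB (hzB ν') (hzC ν)
        simp only [zero_add] at H
        simp only [E0, E1] at H
        rw [add_comm μt' μt, add_comm ν' ν] at H
        intro hg; exact H (by linarith)
  · -- conditions → minimal
    rintro ⟨c1, c2, c3⟩
    intro c hc c' hc' hc0 hc'0 hsub
    obtain ⟨⟨μ, ν⟩, rfl⟩ := hc
    obtain ⟨⟨μ', ν'⟩, rfl⟩ := hc'
    replace hc0 : cw F μ ν ≠ 0 := hc0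
    replace hc'0 : cw F μ' ν' ≠ 0 := hc'0
    replace hsub : {x | cw F μ' ν' x = 1} ⊆ {x | cw F μ ν x = 1} := hsub
    show cw F μ' ν' = cw F μ ν
    by_cases heq : μ = μ' ∧ ν = ν'
    · rw [heq.1, heq.2]
    · exfalso
      have hIW := (hIncl μ ν μ' ν').mp hsub
      obtain ⟨a, t, rfl⟩ : ∃ a t, μ = Fin.cons a t :=
        ⟨μ 0, Fin.tail μ, (Fin.cons_self_tail μ).symm⟩
      obtain ⟨a', t', rfl⟩ : ∃ a t, μ' = Fin.cons a t :=
        ⟨μ' 0, Fin.tail μ', (Fin.cons_self_tail μ').symm⟩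
      simp only [Fin.cons_zero, Fin.tail_cons] at hIW
      rcases z2cases a with rfl | rfl <;> rcases z2cases a' with rfl | rfl
      · -- a = 0, a' = 0 : use minimality of C_G
        rw [hc_eq t ν] at hc0
        rw [hc_eq t' ν'] at hc'0
        rw [hc_eq t ν, hc_eq t' ν'] at hsub
        have m1 : cw G t ν ∈ codeF G := ⟨(t, ν), rfl⟩
        have m2 : cw G t' ν' ∈ codeF G := ⟨(t', ν'), rfl⟩
        have hGeq := hGmin (cw G t ν) m1 (cw G t' ν') m2 hc0 hc'0 hsub
        rw [← hc_eq t' ν', ← hc_eq t ν] at hGeq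
        obtain ⟨h1, h2⟩ := hinj _ _ _ _ hGeq
        exact heq ⟨h1.symm, h2.symm⟩
      · -- a = 0, a' = 1
        simp only [zero_add] at hIW
        simp only [E0, E1] at hIW
        by_cases ht : t = 0
        · subst ht
          have hν0 : ν ≠ 0 := fun h => hc0 (by rw [cons_zero_zero, h]; exact hcw00)
          rw [E0' ν hν0] at hIW
          simp only [zero_add] at hIW
          have hνn : ν' ≠ ν + ν' := by
            intro h
            apply hν0
            have h2 := congrArg (fun z => z + ν') h
            rw [fun2_add_self, addv_cancel] at h2
            exact h2.symm
          by_cases ht' : t' = 0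
          · subst ht'
            simp only [E1'] at hIW
            exact (ha ν' (ν + ν') hνn).1 (by linarith)
          · exact (c1 t' ht' ν' (ν + ν') hνn).1 (by linarith)
        · by_cases ht' : t' = 0
          · subst ht'
            simp only [E1', add_zero] at hIW
            have H2 := (c2 t ht ν' ν).2.1
            rw [add_comm ν' ν] at H2
            exact H2 (by linarith)
          · by_cases htt : t = t'
            · subst htt
              rw [fun2_add_self t, E1' (ν + ν')] at hIW
              have H2 := (c2 t ht (ν + ν') ν).2.1
              have hv : ν + ν' + ν = ν' := by rw [add_comm ν ν']; exact addv_cancel ν' ν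
              rw [hv] at H2
              exact H2 (by linarith)
            · have H3 := (c3 t' t ht' ht (fun h => htt h.symm) ν' ν).2
              rw [add_comm t' t, add_comm ν' ν] at H3
              exact H3 (by linarith)
      · -- a = 1, a' = 0
        simp only [add_zero, zero_add] at hIW
        simp only [E0, E1] at hIW
        by_cases ht' : t' = 0
        · subst ht'
          have hν'0 : ν' ≠ 0 := fun h => hc'0 (by rw [cons_zero_zero, h]; exact hcw00)
          rw [E0' ν' hν'0] at hIW
          simp only [add_zero] at hIW
          have hνn : ν + ν' ≠ ν := by
            intro h
            exact hν'0 (add_left_cancel (h.trans (add_zero ν).symm))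
          by_cases ht : t = 0
          · subst ht
            simp only [E1'] at hIW
            exact (ha (ν + ν') ν hνn).2 (by linarith)
          · exact (c1 t ht (ν + ν') ν hνn).2 (by linarith)
        · by_cases ht : t = 0
          · subst ht
            simp only [E1', zero_add] at hIW
            exact (c2 t' ht' ν ν').1 (by linarith)
          · by_cases htt : t = t'
            · subst htt
              rw [fun2_add_self t, E1' (ν + ν')] at hIW
              have H2 := (c2 t ht (ν + ν') ν').2.2
              rw [addv_cancel ν ν'] at H2
              exact H2 (by linarith)
            · have htt0 : t + t' ≠ 0 := fun h => htt (fun2_add_eq_zero h)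
              have hne : t + t' ≠ t' := by
                intro h
                apply ht
                have h2 := congrArg (fun z => z + t') h
                rw [addv_cancel, fun2_add_self] at h2
                exact h2
              have H3 := (c3 (t + t') t' htt0 ht' hne (ν + ν') ν').1
              rw [addv_cancel t t', addv_cancel ν ν'] at H3
              exact H3 (by linarith)
      · -- a = 1, a' = 1
        rw [show ((1:ZMod 2) + 1) = 0 from by decide] at hIW
        by_cases htt : t = t'
        · subst htt
          have hνν' : ν ≠ ν' := fun h => heq ⟨rfl, h⟩
          have hνν0 : ν + ν' ≠ 0 := fun h => hνν' (fun2_add_eq_zero h)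
          rw [fun2_add_self t, E00 (ν + ν') hνν0] at hIW
          simp only [E1] at hIW
          by_cases ht : t = 0
          · subst ht
            simp only [E1'] at hIW
            exact (ha ν' ν (Ne.symm hνν')).2 (by linarith)
          · exact (c1 t ht ν' ν (Ne.symm hνν')).2 (by linarith)
        · have htt0 : t + t' ≠ 0 := fun h => htt (fun2_add_eq_zero h)
          simp only [E0, E1] at hIW
          by_cases ht : t = 0
          · subst ht
            simp only [E1', zero_add] at hIW
            have ht' : t' ≠ 0 := fun h => htt (by rw [h])
            have H2 := (c2 t' ht' ν (ν + ν')).1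
            rw [addv_cancel_left ν ν'] at H2
            exact H2 (by linarith)
          · by_cases ht' : t' = 0
            · subst ht'
              simp only [E1', add_zero] at hIW
              have H2 := (c2 t ht ν' (ν + ν')).2.2
              have hv : ν' + (ν + ν') = ν := by rw [add_comm ν ν']; exact addv_cancel_left ν' ν
              rw [hv] at H2
              exact H2 (by linarith)
            · have hne : t' ≠ t + t' := by
                intro h
                apply ht
                have h2 := congrArg (fun z => z + t') h
                rw [fun2_add_self, addv_cancel] at h2
                exact h2.symm
              have H3 := (c3 t' (t + t') ht' htt0 hne ν' (ν + ν')).1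
              have hv1 : t' + (t + t') = t := by rw [add_comm t t']; exact addv_cancel_left t' t
              have hv2 : ν' + (ν + ν') = ν := by rw [add_comm ν ν']; exact addv_cancel_left ν' ν
              rw [hv1, hv2] at H3
              exact H3 (by linarith)
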